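/- arXiv:2011.07769 — 3 statements merged into one kernel-verified Lean document; each statement's English description precedes it below -/
import Mathlib

section
/- Let L ∈ ℝ^{N×N} be a Laplacian matrix and let k be an index with ℓ_kk > 0. Then L^(k) − (1/ℓ_kk) · L(:,k) L(k,:) = (1/2) ∑_{i ≠ k, j ≠ k} (ℓ_ki ℓ_kj / ℓ_kk) · b_ij b_ijᵀ, and this matrix is itself a Laplacian matrix (the graph Laplacian of the clique among the neighbors of k, where the edge between neighbors i and j carries weight ℓ_ki ℓ_kj / ℓ_kk ≥ 0). -/
open Matrix Finset

/-- A matrix `L` is a Laplacian matrix if it is symmetric, every row sums to zero,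
and off-diagonal entries are non-positive. -/
def IsLaplacian {N : ℕ} (L : Matrix (Fin N) (Fin N) ℝ) : Prop :=
  L.IsSymm ∧ (∀ i, ∑ j, L i j = 0) ∧ ∀ i j, i ≠ j → L i j ≤ 0

/-- The matrix `b_ij b_ijᵀ` where `b_ij = e_i - e_j` is the difference of two
standard basis vectors. -/
noncomputable def edgeMatrix {N : ℕ} (i j : Fin N) : Matrix (Fin N) (Fin N) ℝ :=
  Matrix.vecMulVec (Pi.single i 1 - Pi.single j 1) (Pi.single i 1 - Pi.single j 1)

/-- `L^(k) = ∑_{i ≠ k} (−ℓ_ki) · b_ki b_kiᵀ`. -/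
noncomputable def starLaplacian {N : ℕ} (L : Matrix (Fin N) (Fin N) ℝ) (k : Fin N) :
    Matrix (Fin N) (Fin N) ℝ :=
  ∑ i ∈ Finset.univ.filter (· ≠ k), (-(L k i)) • edgeMatrix k i

noncomputable def FF {N : ℕ} (L : Matrix (Fin N) (Fin N) ℝ) (k x : Fin N) : ℝ :=
  if x = k then 0 else L k x

lemma sum_FF {N : ℕ} (L : Matrix (Fin N) (Fin N) ℝ) (k : Fin N)
    (hrow : ∑ j, L k j = 0) : ∑ j, FF L k j = - L k k := by
  have h1 : ∀ j, FF L k j = L k j - (if j = k then L k j else 0) := by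
    intro j; unfold FF; split <;> simp_all
  simp only [h1]
  rw [Finset.sum_sub_distrib, hrow, Finset.sum_ite_eq' Finset.univ k (L k)]
  simp

lemma sum_FF_ite {N : ℕ} (L : Matrix (Fin N) (Fin N) ℝ) (k x : Fin N) :
    ∑ j, FF L k j * (if x = j then (1:ℝ) else 0) = FF L k x := by
  simp [mul_ite]

lemma sum_FF_ite2 {N : ℕ} (L : Matrix (Fin N) (Fin N) ℝ) (k a b : Fin N) :
    ∑ j, FF L k j * ((if a = j then (1:ℝ) else 0) * (if b = j then (1:ℝ) else 0))
      = if a = b then FF L k a else 0 := by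
  by_cases hab : a = b
  · subst hab; simp [mul_ite]
  · rw [if_neg hab]
    refine Finset.sum_eq_zero fun j _ => ?_
    by_cases h1 : a = j <;> by_cases h2 : b = j <;> simp_all

lemma sum_Lk_ite {N : ℕ} (L : Matrix (Fin N) (Fin N) ℝ) (k x : Fin N) :
    ∑ j, L k j * (if x = j then (1:ℝ) else 0) = L k x := by
  simp [mul_ite]

lemma sum_Lk_ite2 {N : ℕ} (L : Matrix (Fin N) (Fin N) ℝ) (k a b : Fin N) :
    ∑ j, L k j * ((if a = j then (1:ℝ) else 0) * (if b = j then (1:ℝ) else 0))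
      = if a = b then L k a else 0 := by
  by_cases hab : a = b
  · subst hab; simp [mul_ite]
  · rw [if_neg hab]
    refine Finset.sum_eq_zero fun j _ => ?_
    by_cases h1 : a = j <;> by_cases h2 : b = j <;> simp_all
lemma edgeMatrix_apply {N : ℕ} (i j a b : Fin N) :
    edgeMatrix i j a b = ((if a = i then (1:ℝ) else 0) - (if a = j then 1 else 0))
      * ((if b = i then (1:ℝ) else 0) - (if b = j then 1 else 0)) := by
  simp [edgeMatrix, Matrix.vecMulVec_apply, Pi.single_apply]

lemma star_entry {N : ℕ} (L : Matrix (Fin N) (Fin N) ℝ) (k a b : Fin N) :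
    starLaplacian L k a b
      = ∑ i, (-(L k i)) * (((if a = k then (1:ℝ) else 0) - (if a = i then 1 else 0))
          * ((if b = k then (1:ℝ) else 0) - (if b = i then 1 else 0))) := by
  rw [starLaplacian, Matrix.sum_apply, Finset.sum_filter]
  refine Finset.sum_congr rfl fun i _ => ?_
  by_cases h : i = k <;> simp [h, edgeMatrix_apply, mul_assoc]

lemma lhs_entry {N : ℕ} (L : Matrix (Fin N) (Fin N) ℝ) (k : Fin N)
    (hsym : L.IsSymm) (hrow : ∑ j, L k j = 0) (hkk : L k k ≠ 0) (a b : Fin N) :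
    (starLaplacian L k - (L k k)⁻¹ • Matrix.vecMulVec (fun i => L i k) (L k)) a b
      = -(if a = b then FF L k a else 0) - FF L k a * FF L k b / L k k := by
  have hab : L a k = L k a := hsym.apply k a
  rw [Matrix.sub_apply, Matrix.smul_apply, Matrix.vecMulVec_apply, star_entry,
    smul_eq_mul]
  have key : ∀ i : Fin N, (-(L k i)) * (((if a = k then (1:ℝ) else 0) - (if a = i then 1 else 0))
          * ((if b = k then (1:ℝ) else 0) - (if b = i then 1 else 0)))
      = -((if a = k then (1:ℝ) else 0) * (if b = k then (1:ℝ) else 0) * L k i)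
        + (if a = k then (1:ℝ) else 0) * (L k i * (if b = i then (1:ℝ) else 0))
        + (if b = k then (1:ℝ) else 0) * (L k i * (if a = i then (1:ℝ) else 0))
        - L k i * ((if a = i then (1:ℝ) else 0) * (if b = i then (1:ℝ) else 0)) := by
    intro i; ring
  simp only [key]
  rw [Finset.sum_sub_distrib, Finset.sum_add_distrib, Finset.sum_add_distrib,
    ← Finset.mul_sum, ← Finset.mul_sum, Finset.sum_neg_distrib, ← Finset.mul_sum,
    hrow, sum_Lk_ite, sum_Lk_ite, sum_Lk_ite2, hab]
  unfold FF
  by_cases h1 : a = k <;> by_cases h2 : b = k <;> by_cases h3 : a = b <;>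
    simp_all <;> (try field_simp) <;> (try ring)

lemma rhs_entry {N : ℕ} (L : Matrix (Fin N) (Fin N) ℝ) (k : Fin N)
    (hrow : ∑ j, L k j = 0) (hkk : L k k ≠ 0) (a b : Fin N) :
    ((1 / 2 : ℝ) • ∑ i ∈ Finset.univ.filter (· ≠ k), ∑ j ∈ Finset.univ.filter (· ≠ k),
        (L k i * L k j / L k k) • edgeMatrix i j) a b
      = -(if a = b then FF L k a else 0) - FF L k a * FF L k b / L k k := by
  have conv : (∑ i ∈ Finset.univ.filter (· ≠ k), ∑ j ∈ Finset.univ.filter (· ≠ k),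
        (L k i * L k j / L k k) • edgeMatrix i j) a b
      = ∑ i, ∑ j, (FF L k i * FF L k j / L k k) * (edgeMatrix i j a b) := by
    simp only [Matrix.sum_apply, Matrix.smul_apply, smul_eq_mul, Finset.sum_filter]
    refine Finset.sum_congr rfl fun i _ => ?_
    by_cases hi : i = k
    · subst hi
      simp [FF]
    · rw [if_pos hi]
      refine Finset.sum_congr rfl fun j _ => ?_
      by_cases hj : j = k
      · subst hj; simp [FF]
      · rw [if_pos hj]; unfold FF
        rw [if_neg hi, if_neg hj, Matrix.smul_apply, smul_eq_mul]
  rw [Matrix.smul_apply, conv, smul_eq_mul]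
  have key : ∀ i j : Fin N, (FF L k i * FF L k j / L k k) * (edgeMatrix i j a b)
      = (L k k)⁻¹ *
        ((FF L k i * ((if a = i then (1:ℝ) else 0) * (if b = i then (1:ℝ) else 0))) * FF L k j
         - (FF L k i * (if a = i then (1:ℝ) else 0)) * (FF L k j * (if b = j then (1:ℝ) else 0))
         - (FF L k i * (if b = i then (1:ℝ) else 0)) * (FF L k j * (if a = j then (1:ℝ) else 0))
         + FF L k i * (FF L k j * ((if a = j then (1:ℝ) else 0) * (if b = j then (1:ℝ) else 0)))) := by
    intro i j
    rw [edgeMatrix_apply, div_eq_mul_inv]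
    ring
  simp only [key]
  simp only [Finset.sum_add_distrib, Finset.sum_sub_distrib, ← Finset.mul_sum,
    ← Finset.sum_mul]
  rw [sum_FF L k hrow, sum_FF_ite, sum_FF_ite, sum_FF_ite2]
  rw [div_eq_mul_inv]
  by_cases hab : a = b <;> simp only [if_pos, if_neg, hab, if_true, if_false] <;>
    field_simp <;> ring
lemma FF_nonpos {N : ℕ} (L : Matrix (Fin N) (Fin N) ℝ) (k : Fin N)
    (hoff : ∀ i j, i ≠ j → L i j ≤ 0) (x : Fin N) : FF L k x ≤ 0 := by
  unfold FF; split
  · exact le_refl 0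
  · exact hoff k x fun h => (by simp_all)

/-- The clique identity: `L^(k) − (1/ℓ_kk) · L(:,k) L(k,:)` equals
`(1/2) ∑_{i ≠ k, j ≠ k} (ℓ_ki ℓ_kj / ℓ_kk) · b_ij b_ijᵀ`, the graph Laplacian of the
clique among the neighbors of `k`; in particular this matrix is a Laplacian matrix. -/
theorem clique_update {N : ℕ} (L : Matrix (Fin N) (Fin N) ℝ)
    (hL : IsLaplacian L) (k : Fin N) (hk : 0 < L k k) :
    starLaplacian L k - (L k k)⁻¹ • Matrix.vecMulVec (fun i => L i k) (L k)
      = (1 / 2 : ℝ) •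
        ∑ i ∈ Finset.univ.filter (· ≠ k), ∑ j ∈ Finset.univ.filter (· ≠ k),
          (L k i * L k j / L k k) • edgeMatrix i j ∧
    IsLaplacian
      (starLaplacian L k - (L k k)⁻¹ • Matrix.vecMulVec (fun i => L i k) (L k)) := by
  obtain ⟨hsym, hrow, hoff⟩ := hL
  have hkk : L k k ≠ 0 := hk.ne'
  constructor
  · ext a b
    rw [lhs_entry L k hsym (hrow k) hkk, ← rhs_entry L k (hrow k) hkk]
  · refine ⟨?_, ?_, ?_⟩
    · rw [Matrix.IsSymm]
      ext a b
      rw [Matrix.transpose_apply, lhs_entry L k hsym (hrow k) hkk,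
        lhs_entry L k hsym (hrow k) hkk]
      by_cases hab : a = b
      · subst hab; ring
      · rw [if_neg hab, if_neg (Ne.symm hab)]; ring
    · intro a
      have h1 : ∀ b, (starLaplacian L k - (L k k)⁻¹ • Matrix.vecMulVec (fun i => L i k) (L k)) a b
          = -(if a = b then FF L k a else 0) - (FF L k a * (L k k)⁻¹) * FF L k b := by
        intro b
        rw [lhs_entry L k hsym (hrow k) hkk, div_eq_mul_inv]; ring
      simp only [h1]
      rw [Finset.sum_sub_distrib, Finset.sum_neg_distrib, ← Finset.mul_sum,
        sum_FF L k (hrow k), Finset.sum_ite_eq]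
      simp
      field_simp
      ring
    · intro i j hij
      rw [lhs_entry L k hsym (hrow k) hkk, if_neg hij]
      have : (0:ℝ) ≤ FF L k i * FF L k j := by
        nlinarith [FF_nonpos L k hoff i, FF_nonpos L k hoff j]
      have hd : 0 ≤ FF L k i * FF L k j / L k k := div_nonneg this hk.le
      linarith
end

section
/- Let L ∈ ℝ^{N×N} be an irreducible Laplacian matrix with N > 1 and let k be an index (so ℓ_kk > 0). Then the principal submatrix of the Schur-complement update L − (1/ℓ_kk) · L(:,k) L(k,:) obtained by deleting row k and column k is an irreducible Laplacian matrix of size (N−1)×(N−1). -/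
open Matrix Finset

/-- A symmetric matrix is irreducible if there is no nonempty proper subset `S` of the index
set with `L i j = 0` for all `i ∈ S` and `j ∉ S`. -/
def IsIrreducibleMat {N : ℕ} (L : Matrix (Fin N) (Fin N) ℝ) : Prop :=
  ¬ ∃ S : Set (Fin N), S.Nonempty ∧ S ≠ Set.univ ∧ ∀ i ∈ S, ∀ j ∉ S, L i j = 0

/-- For an irreducible Laplacian matrix `L` of size `N = n + 1 > 1` and an index `k`,
the principal submatrix of the Schur-complement update `L − (1/ℓ_kk) L(:,k) L(k,:)`
obtained by deleting row `k` and column `k` is an irreducible Laplacian matrix of size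
`(N−1) × (N−1)`. -/
theorem schur_update_irreducible_laplacian {n : ℕ} (hn : 1 ≤ n)
    (L : Matrix (Fin (n + 1)) (Fin (n + 1)) ℝ)
    (hL : IsLaplacian L) (hirr : IsIrreducibleMat L) (k : Fin (n + 1)) :
    IsLaplacian
      ((L - (L k k)⁻¹ • Matrix.vecMulVec (fun i => L i k) (L k)).submatrix
        k.succAbove k.succAbove) ∧
    IsIrreducibleMat
      ((L - (L k k)⁻¹ • Matrix.vecMulVec (fun i => L i k) (L k)).submatrix
        k.succAbove k.succAbove) := by
  obtain ⟨hsym, hrow, hoff⟩ := hL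
  have hsa : ∀ a b, L b a = L a b := fun a b => congrFun (congrFun hsym a) b
  have hne : ∀ i : Fin n, k.succAbove i ≠ k := fun i => Fin.succAbove_ne k i
  have hinj : Function.Injective k.succAbove := Fin.succAbove_right_injective
  have hM : ∀ i j : Fin n,
      ((L - (L k k)⁻¹ • Matrix.vecMulVec (fun i => L i k) (L k)).submatrix
        k.succAbove k.succAbove) i j
      = L (k.succAbove i) (k.succAbove j)
        - (L k k)⁻¹ * (L (k.succAbove i) k * L k (k.succAbove j)) := by
    intro i j
    simp [Matrix.submatrix_apply, Matrix.sub_apply, Matrix.smul_apply,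
      Matrix.vecMulVec_apply, smul_eq_mul]
  have hrow' : ∀ i, ∑ j, L i (k.succAbove j) = - L i k := by
    intro i
    have h := hrow i
    rw [Fin.sum_univ_succAbove (fun j => L i j) k] at h
    linarith
  have hd0 : 0 ≤ L k k := by
    have h := hrow' k
    have h2 : ∑ j, L k (k.succAbove j) ≤ 0 :=
      Finset.sum_nonpos fun j _ => hoff k _ (hne j).symm
    linarith
  have hd : 0 < L k k := by
    rcases hd0.lt_or_eq with h | h
    · exact h
    · exfalso
      have hz : ∀ j, L k (k.succAbove j) = 0 := by
        have hs : ∑ j, L k (k.succAbove j) = 0 := by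
          have := hrow' k; linarith
        intro j
        exact (Finset.sum_eq_zero_iff_of_nonpos
          (fun j _ => hoff k _ (hne j).symm)).mp hs j (mem_univ j)
      apply hirr
      refine ⟨{k}, ⟨k, rfl⟩, ?_, ?_⟩
      · intro h'
        have h1 : k.succAbove ⟨0, hn⟩ ∈ ({k} : Set _) := h' ▸ Set.mem_univ _
        exact hne _ h1
      · intro i hi j hj
        have hik : i = k := hi
        have hjk : j ≠ k := hj
        obtain ⟨j', rfl⟩ := Fin.exists_succAbove_eq hjk
        rw [hik]; exact hz j'
  have hdinv : 0 < (L k k)⁻¹ := inv_pos.mpr hd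
  constructor
  · refine ⟨?_, ?_, ?_⟩
    · apply Matrix.IsSymm.ext
      intro i j
      rw [hM, hM]
      rw [hsa (k.succAbove i) (k.succAbove j), hsa k (k.succAbove i),
        hsa (k.succAbove j) k]
      ring
    · intro i
      have hsum : ∑ j, ((L - (L k k)⁻¹ • Matrix.vecMulVec (fun i => L i k) (L k)).submatrix
          k.succAbove k.succAbove) i j
          = ∑ j, (L (k.succAbove i) (k.succAbove j)
            - (L k k)⁻¹ * (L (k.succAbove i) k * L k (k.succAbove j))) :=
        Finset.sum_congr rfl fun j _ => hM i j
      rw [hsum, Finset.sum_sub_distrib, hrow']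
      have : ∑ j, (L k k)⁻¹ * (L (k.succAbove i) k * L k (k.succAbove j))
          = (L k k)⁻¹ * (L (k.succAbove i) k * ∑ j, L k (k.succAbove j)) := by
        simp only [Finset.mul_sum]
      rw [this, hrow' k]
      have hdne : L k k ≠ 0 := ne_of_gt hd
      field_simp
      ring
    · intro i j hij
      rw [hM]
      have h1 : L (k.succAbove i) (k.succAbove j) ≤ 0 :=
        hoff _ _ (fun h => hij (hinj h))
      have h2 : L (k.succAbove i) k ≤ 0 := hoff _ _ (hne i)
      have h3 : L k (k.succAbove j) ≤ 0 := hoff _ _ (hne j).symm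
      have h4 : 0 ≤ L (k.succAbove i) k * L k (k.succAbove j) := by nlinarith
      have h5 := mul_nonneg hdinv.le h4
      linarith
  · rintro ⟨S', ⟨i0, hi0⟩, hS'ne, hS'⟩
    have key : ∀ i' ∈ S', ∀ j' ∉ S',
        L (k.succAbove i') (k.succAbove j') = 0 ∧
          L (k.succAbove i') k * L k (k.succAbove j') = 0 := by
      intro i' hi' j' hj'
      have h0 := hS' i' hi' j' hj'
      rw [hM] at h0
      have h1 : L (k.succAbove i') (k.succAbove j') ≤ 0 :=
        hoff _ _ (fun h => hj' (hinj h ▸ hi'))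
      have h2 : L (k.succAbove i') k ≤ 0 := hoff _ _ (hne i')
      have h3 : L k (k.succAbove j') ≤ 0 := hoff _ _ (hne j').symm
      have h4 : 0 ≤ L (k.succAbove i') k * L k (k.succAbove j') := by nlinarith
      have h5 : 0 ≤ (L k k)⁻¹ * (L (k.succAbove i') k * L k (k.succAbove j')) :=
        mul_nonneg hdinv.le h4
      have ha : L (k.succAbove i') (k.succAbove j') = 0 := by linarith
      refine ⟨ha, ?_⟩
      have hb : (L k k)⁻¹ * (L (k.succAbove i') k * L k (k.succAbove j')) = 0 := by
        linarith
      exact (mul_eq_zero.mp hb).resolve_left (ne_of_gt hdinv)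
    by_cases hcol : ∀ i' ∈ S', L (k.succAbove i') k = 0
    · apply hirr
      refine ⟨k.succAbove '' S', ⟨_, Set.mem_image_of_mem _ hi0⟩, ?_, ?_⟩
      · intro h
        have hk : k ∈ k.succAbove '' S' := h ▸ Set.mem_univ k
        obtain ⟨i', _, hi'⟩ := hk
        exact hne i' hi'
      · rintro i ⟨i', hi', rfl⟩ j hj
        by_cases hjk : j = k
        · subst hjk; exact hcol i' hi'
        · obtain ⟨j', rfl⟩ := Fin.exists_succAbove_eq hjk
          have hj' : j' ∉ S' := fun h => hj (Set.mem_image_of_mem _ h)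
          exact (key i' hi' j' hj').1
    · push_neg at hcol
      obtain ⟨i1, hi1, hL1⟩ := hcol
      have hkcol : ∀ j' ∉ S', L k (k.succAbove j') = 0 := by
        intro j' hj'
        exact (mul_eq_zero.mp (key i1 hi1 j' hj').2).resolve_left hL1
      apply hirr
      refine ⟨insert k (k.succAbove '' S'), ⟨k, Set.mem_insert _ _⟩, ?_, ?_⟩
      · intro h
        obtain ⟨j0, hj0⟩ : ∃ j0, j0 ∉ S' := by
          by_contra h'
          push_neg at h'
          exact hS'ne (Set.eq_univ_of_forall h')
        have hmem : k.succAbove j0 ∈ insert k (k.succAbove '' S') := h ▸ Set.mem_univ _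
        simp only [Set.mem_insert_iff, Set.mem_image] at hmem
        rcases hmem with h' | ⟨j', hj', hj''⟩
        · exact hne j0 h'
        · exact hj0 (hinj hj'' ▸ hj')
      · intro i hi j hj
        have hjk : j ≠ k := fun h => hj (h ▸ Set.mem_insert _ _)
        obtain ⟨j', rfl⟩ := Fin.exists_succAbove_eq hjk
        have hj' : j' ∉ S' := fun h =>
          hj (Set.mem_insert_of_mem _ (Set.mem_image_of_mem _ h))
        simp only [Set.mem_insert_iff, Set.mem_image] at hi
        rcases hi with rfl | ⟨i', hi', rfl⟩
        · exact hkcol j' hj'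
        · exact (key i' hi' j' hj').1
end

section
/- Let L ∈ ℝ^{N×N} be a Laplacian matrix, let k be an index with ℓ_kk > 0, and let 𝒩 = {i ≠ k : ℓ_ki ≠ 0}. Assume the magnitudes |ℓ_ki| for i ∈ 𝒩 are pairwise distinct. Then ∑_{(i,j) : i,j ∈ 𝒩, |ℓ_ki| < |ℓ_kj|} (ℓ_ki ℓ_kj / ℓ_kk) · b_ij b_ijᵀ = L^(k) − (1/ℓ_kk) · L(:,k) L(k,:). (In the SampleClique algorithm, when i is processed the pair (i,j) with |ℓ_kj| > |ℓ_ki| is chosen with probability |ℓ_kj|/S and assigned weight S|ℓ_ki|/ℓ_kk where S = ∑_{j ∈ 𝒩, |ℓ_kj| > |ℓ_ki|} |ℓ_kj|; the products (|ℓ_kj|/S)·(S|ℓ_ki|/ℓ_kk) = ℓ_ki ℓ_kj/ℓ_kk sum to the exact clique update, so SampleClique is an unbiased estimator of the clique Laplacian.) -/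
open Matrix Finset
open scoped Classical

lemma key_scalar {N : ℕ} (w c r : Fin N → ℝ) (d X Y : ℝ) (k : Fin N) (hd : d ≠ 0)
    (hdist : ∀ i j : Fin N, (i ≠ k ∧ w i ≠ 0) → (j ≠ k ∧ w j ≠ 0) → i ≠ j →
      |w i| ≠ |w j|)
    (hSw : ∑ i ∈ Finset.univ.filter (fun i => i ≠ k ∧ w i ≠ 0), w i = -d)
    (hX : X = (∑ i ∈ Finset.univ.filter (fun i => i ≠ k ∧ w i ≠ 0), w i * c i) + d * c k)
    (hY : Y = (∑ i ∈ Finset.univ.filter (fun i => i ≠ k ∧ w i ≠ 0), w i * r i) + d * r k) :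
    ∑ p ∈ Finset.univ.filter (fun p : Fin N × Fin N =>
        (p.1 ≠ k ∧ w p.1 ≠ 0) ∧ (p.2 ≠ k ∧ w p.2 ≠ 0) ∧ |w p.1| < |w p.2|),
      (w p.1 * w p.2 / d) * ((c p.1 - c p.2) * (r p.1 - r p.2))
    = (∑ i ∈ Finset.univ.filter (· ≠ k), (-(w i)) * ((c k - c i) * (r k - r i)))
      - d⁻¹ * (X * Y) := by
  classical
  set 𝒩 : Finset (Fin N) := Finset.univ.filter (fun i => i ≠ k ∧ w i ≠ 0) with h𝒩
  set F : Fin N × Fin N → ℝ :=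
    fun p => (w p.1 * w p.2 / d) * ((c p.1 - c p.2) * (r p.1 - r p.2)) with hF
  set S : Finset (Fin N × Fin N) := Finset.univ.filter (fun p : Fin N × Fin N =>
      (p.1 ≠ k ∧ w p.1 ≠ 0) ∧ (p.2 ≠ k ∧ w p.2 ≠ 0) ∧ |w p.1| < |w p.2|) with hS
  set T : Finset (Fin N × Fin N) := Finset.univ.filter (fun p : Fin N × Fin N =>
      (p.1 ≠ k ∧ w p.1 ≠ 0) ∧ (p.2 ≠ k ∧ w p.2 ≠ 0)) with hT
  have hTS : T.filter (fun p => |w p.1| < |w p.2|) = S := by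
    rw [hT, hS, Finset.filter_filter]
    apply Finset.filter_congr
    intro p _
    tauto
  have hswap1 : ∑ p ∈ S, F p = ∑ p ∈ T.filter (fun p => |w p.2| < |w p.1|), F p := by
    apply Finset.sum_nbij' (i := Prod.swap) (j := Prod.swap)
    · intro p hp
      simp only [hS, hT, Finset.mem_filter, Finset.mem_univ, true_and, Prod.fst_swap,
        Prod.snd_swap] at hp ⊢
      exact ⟨⟨hp.2.1, hp.1⟩, hp.2.2⟩
    · intro p hp
      simp only [hS, hT, Finset.mem_filter, Finset.mem_univ, true_and, Prod.fst_swap,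
        Prod.snd_swap] at hp ⊢
      exact ⟨hp.1.2, hp.1.1, hp.2⟩
    · intro p _; exact Prod.swap_swap p
    · intro p _; exact Prod.swap_swap p
    · intro p _
      simp only [hF, Prod.fst_swap, Prod.snd_swap]
      ring
  have hzero : ∑ p ∈ T.filter (fun p => ¬ |w p.1| < |w p.2|), F p
      = ∑ p ∈ T.filter (fun p => |w p.2| < |w p.1|), F p := by
    refine (Finset.sum_subset ?_ ?_).symm
    · intro p hp
      simp only [Finset.mem_filter] at hp ⊢
      exact ⟨hp.1, not_lt_of_gt hp.2⟩
    · intro p hp hnp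
      simp only [hT, Finset.mem_filter, Finset.mem_univ, true_and] at hp hnp
      have heq : |w p.1| = |w p.2| := le_antisymm (not_lt.mp (fun h => hnp ⟨hp.1, h⟩)) (not_lt.mp hp.2)
      have hpe : p.1 = p.2 := by
        by_contra hne
        exact hdist p.1 p.2 hp.1.1 hp.1.2 hne heq
      simp only [hF, hpe, sub_self, mul_zero, zero_mul]
  have hdouble : ∑ p ∈ T, F p = (∑ p ∈ S, F p) + (∑ p ∈ S, F p) := by
    rw [← Finset.sum_filter_add_sum_filter_not T (fun p => |w p.1| < |w p.2|) F, hTS,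
      hzero, ← hswap1]
  have hTprod : T = 𝒩 ×ˢ 𝒩 := by
    rw [hT, h𝒩]
    ext p
    simp [Finset.mem_product]
  -- compute the double sum
  have hinner : ∀ i : Fin N, ∑ j ∈ 𝒩, F (i, j)
      = -(w i * c i * r i) - (w i * c i / d) * (∑ j ∈ 𝒩, w j * r j)
        - (w i * r i / d) * (∑ j ∈ 𝒩, w j * c j)
        + (w i / d) * (∑ j ∈ 𝒩, w j * c j * r j) := by
    intro i
    have : ∀ j : Fin N, F (i, j)
        = (w i * c i * r i / d) * w j - (w i * c i / d) * (w j * r j)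
          - (w i * r i / d) * (w j * c j) + (w i / d) * (w j * c j * r j) := by
      intro j
      simp only [hF]
      ring
    rw [Finset.sum_congr rfl (fun j _ => this j), Finset.sum_add_distrib,
      Finset.sum_sub_distrib, Finset.sum_sub_distrib, ← Finset.mul_sum, ← Finset.mul_sum,
      ← Finset.mul_sum, ← Finset.mul_sum, hSw]
    field_simp
  have hdsum : ∑ p ∈ T, F p
      = -2 * (∑ i ∈ 𝒩, w i * c i * r i)
        - 2 * d⁻¹ * ((∑ i ∈ 𝒩, w i * c i) * (∑ i ∈ 𝒩, w i * r i)) := by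
    rw [hTprod, Finset.sum_product]
    rw [Finset.sum_congr rfl (fun i _ => hinner i)]
    rw [Finset.sum_add_distrib, Finset.sum_sub_distrib, Finset.sum_sub_distrib]
    have e1 : ∑ i ∈ 𝒩, -(w i * c i * r i) = -(∑ i ∈ 𝒩, w i * c i * r i) :=
      Finset.sum_neg_distrib _
    have e2 : ∑ i ∈ 𝒩, (w i * c i / d) * (∑ j ∈ 𝒩, w j * r j)
        = (∑ i ∈ 𝒩, w i * c i) * (∑ j ∈ 𝒩, w j * r j) / d := by
      rw [← Finset.sum_mul, ← Finset.sum_div]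
      ring
    have e3 : ∑ i ∈ 𝒩, (w i * r i / d) * (∑ j ∈ 𝒩, w j * c j)
        = (∑ i ∈ 𝒩, w i * r i) * (∑ j ∈ 𝒩, w j * c j) / d := by
      rw [← Finset.sum_mul, ← Finset.sum_div]
      ring
    have e4 : ∑ i ∈ 𝒩, (w i / d) * (∑ j ∈ 𝒩, w j * c j * r j)
        = (∑ i ∈ 𝒩, w i) * (∑ j ∈ 𝒩, w j * c j * r j) / d := by
      rw [← Finset.sum_mul, ← Finset.sum_div]
      ring
    rw [e1, e2, e3, e4, hSw]
    field_simp
    ring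
  -- the star part
  have hstar : ∑ i ∈ Finset.univ.filter (· ≠ k), (-(w i)) * ((c k - c i) * (r k - r i))
      = d * (c k * r k) + c k * (∑ i ∈ 𝒩, w i * r i) + r k * (∑ i ∈ 𝒩, w i * c i)
        - (∑ i ∈ 𝒩, w i * c i * r i) := by
    have hsub : ∑ i ∈ Finset.univ.filter (· ≠ k), (-(w i)) * ((c k - c i) * (r k - r i))
        = ∑ i ∈ 𝒩, (-(w i)) * ((c k - c i) * (r k - r i)) := by
      refine (Finset.sum_subset ?_ ?_).symm
      · intro i hi
        simp only [h𝒩, Finset.mem_filter, Finset.mem_univ, true_and] at hi ⊢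
        exact hi.1
      · intro i hi hni
        simp only [h𝒩, Finset.mem_filter, Finset.mem_univ, true_and] at hi hni
        have : w i = 0 := by
          by_contra h
          exact hni ⟨hi, h⟩
        rw [this, neg_zero, zero_mul]
    rw [hsub]
    have : ∀ i : Fin N, (-(w i)) * ((c k - c i) * (r k - r i))
        = -((c k * r k) * w i) + c k * (w i * r i) + r k * (w i * c i) - w i * c i * r i := by
      intro i; ring
    rw [Finset.sum_congr rfl (fun i _ => this i), Finset.sum_sub_distrib,
      Finset.sum_add_distrib, Finset.sum_add_distrib, Finset.sum_neg_distrib,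
      ← Finset.mul_sum, ← Finset.mul_sum, ← Finset.mul_sum, hSw]
    ring
  -- conclude
  have hlhs2 : (∑ p ∈ S, F p) + (∑ p ∈ S, F p)
      = -2 * (∑ i ∈ 𝒩, w i * c i * r i)
        - 2 * d⁻¹ * ((∑ i ∈ 𝒩, w i * c i) * (∑ i ∈ 𝒩, w i * r i)) := by
    rw [← hdouble, hdsum]
  have hgoal2 : ((∑ i ∈ Finset.univ.filter (· ≠ k), (-(w i)) * ((c k - c i) * (r k - r i)))
      - d⁻¹ * (X * Y)) + ((∑ i ∈ Finset.univ.filter (· ≠ k),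
        (-(w i)) * ((c k - c i) * (r k - r i))) - d⁻¹ * (X * Y))
      = -2 * (∑ i ∈ 𝒩, w i * c i * r i)
        - 2 * d⁻¹ * ((∑ i ∈ 𝒩, w i * c i) * (∑ i ∈ 𝒩, w i * r i)) := by
    rw [hstar, hX, hY]
    field_simp
    ring
  show ∑ p ∈ S, F p = _
  linarith [hlhs2, hgoal2]

/-- Unbiased estimator identity: for a Laplacian `L` with `ℓ_kk > 0`, neighbor set
`𝒩 = {i ≠ k : ℓ_ki ≠ 0}` with pairwise distinct magnitudes `|ℓ_ki|`, summing
`(ℓ_ki ℓ_kj / ℓ_kk) b_ij b_ijᵀ` over the ordered pairs `(i,j)` of neighbors with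
`|ℓ_ki| < |ℓ_kj|` yields exactly `L^(k) − (1/ℓ_kk) L(:,k) L(k,:)`. -/
theorem sampleClique_unbiased {N : ℕ} (L : Matrix (Fin N) (Fin N) ℝ)
    (hL : IsLaplacian L) (k : Fin N) (hk : 0 < L k k)
    (hdist : ∀ i j : Fin N, (i ≠ k ∧ L k i ≠ 0) → (j ≠ k ∧ L k j ≠ 0) → i ≠ j →
      |L k i| ≠ |L k j|) :
    ∑ p ∈ Finset.univ.filter (fun p : Fin N × Fin N =>
        (p.1 ≠ k ∧ L k p.1 ≠ 0) ∧ (p.2 ≠ k ∧ L k p.2 ≠ 0) ∧ |L k p.1| < |L k p.2|),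
      (L k p.1 * L k p.2 / L k k) • edgeMatrix p.1 p.2
    = starLaplacian L k - (L k k)⁻¹ • Matrix.vecMulVec (fun i => L i k) (L k) := by
  obtain ⟨hsymm, hrow, hoff⟩ := hL
  have hd : L k k ≠ 0 := ne_of_gt hk
  ext x y
  simp only [Matrix.sum_apply, Matrix.smul_apply, Matrix.sub_apply, smul_eq_mul,
    edgeMatrix, starLaplacian, Matrix.vecMulVec_apply, Pi.sub_apply]
  have hfull : ∀ f : Fin N → ℝ, ∑ i ∈ Finset.univ.filter (fun i => i ≠ k ∧ L k i ≠ 0),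
      L k i * f i = (∑ i, L k i * f i) - L k k * f k := by
    intro f
    rw [← Finset.sum_erase_eq_sub (Finset.mem_univ k), ← Finset.filter_ne' Finset.univ k]
    refine Finset.sum_subset ?_ ?_
    · intro i hi
      simp only [Finset.mem_filter, Finset.mem_univ, true_and] at hi ⊢
      exact hi.1
    · intro i hi hni
      simp only [Finset.mem_filter, Finset.mem_univ, true_and] at hi hni
      have : L k i = 0 := by
        by_contra h
        exact hni ⟨hi, h⟩
      rw [this, zero_mul]
  have hsingle : ∀ z : Fin N, ∑ i, L k i * (Pi.single i 1 : Fin N → ℝ) z = L k z := by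
    intro z
    simp only [Pi.single_apply, mul_ite, mul_one, mul_zero]
    simp
  have hSw : ∑ i ∈ Finset.univ.filter (fun i => i ≠ k ∧ L k i ≠ 0), L k i = -(L k k) := by
    have := hfull (fun _ => 1)
    simp only [mul_one] at this
    rw [this, hrow k]
    ring
  have hX : L x k = (∑ i ∈ Finset.univ.filter (fun i => i ≠ k ∧ L k i ≠ 0),
      L k i * (Pi.single i 1 : Fin N → ℝ) x) + L k k * (Pi.single k 1 : Fin N → ℝ) x := by
    rw [hfull, hsingle]
    have : L x k = L k x := (hsymm.apply x k).symm
    rw [this]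
    ring
  have hY : L k y = (∑ i ∈ Finset.univ.filter (fun i => i ≠ k ∧ L k i ≠ 0),
      L k i * (Pi.single i 1 : Fin N → ℝ) y) + L k k * (Pi.single k 1 : Fin N → ℝ) y := by
    rw [hfull, hsingle]
    ring
  have := key_scalar (w := L k) (c := fun i => (Pi.single i 1 : Fin N → ℝ) x)
    (r := fun i => (Pi.single i 1 : Fin N → ℝ) y) (d := L k k) (X := L x k) (Y := L k y) (k := k)
    hd hdist hSw hX hY
  convert this using 2
end
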